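/- If every left R-module is virtually semisimple, then R is a semisimple ring. -/

import Mathlib

def VirtuallySemisimple (R : Type*) [Ring R] (M : Type*) [AddCommGroup M] [Module R M] : Prop :=
  ∀ N : Submodule R M, ∃ N' : Submodule R M, (∃ C : Submodule R M, IsCompl N' C) ∧
    Nonempty (N ≃ₗ[R] N')

universe u

/-- A retract of an injective module is injective. -/
lemma inj_retract {R : Type u} [Ring R] {M Q : Type u} [AddCommGroup M] [Module R M]
    [AddCommGroup Q] [Module R Q] [Module.Injective R Q]
    (s : M →ₗ[R] Q) (r : Q →ₗ[R] M) (hr : ∀ x, r (s x) = x) : Module.Injective R M := by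
  constructor
  intro X Y _ _ _ _ f hf g
  obtain ⟨h', hh'⟩ := Module.Injective.out f hf (s.comp g)
  exact ⟨r.comp h', fun x => by simp [hh' x, hr]⟩

/-- If every left `R`-module is virtually semisimple, then `R` is a semisimple ring. -/
theorem stmt1 (R : Type u) [Ring R]
    (h : ∀ (M : Type u) [AddCommGroup M] [Module R M], VirtuallySemisimple R M) :
    IsSemisimpleRing R := by
  refine { toComplementedLattice := ⟨?_⟩ }
  intro N
  -- Embed `R` into an injective module `E`.
  haveI : CategoryTheory.EnoughInjectives (ModuleCat.{u} R) :=
    ModuleCat.enoughInjectives.{u, u} R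
  let E : ModuleCat.{u} R := CategoryTheory.Injective.under (ModuleCat.of R R)
  let ι : ModuleCat.of R R ⟶ E := CategoryTheory.Injective.ι _
  have hι : Function.Injective ι := (ModuleCat.mono_iff_injective ι).1 inferInstance
  haveI hEinj : Module.Injective R E :=
    Module.injective_module_of_injective_object R E
      (inj := CategoryTheory.Injective.injective_under (ModuleCat.of R R))
  -- `N` embeds into `E`
  let s : N →ₗ[R] E := (ι.hom : R →ₗ[R] E).comp N.subtype
  have hs : Function.Injective s := hι.comp N.injective_subtype
  obtain ⟨N', ⟨C, hC⟩, ⟨e⟩⟩ := h E (LinearMap.range s)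
  -- `N ≃ N'` and `N'` is injective (a direct summand of `E`)
  have e1 : N ≃ₗ[R] N' := (LinearEquiv.ofInjective s hs).trans e
  haveI : Module.Injective R N' :=
    inj_retract N'.subtype (N'.linearProjOfIsCompl C hC)
      (fun x => Submodule.linearProjOfIsCompl_apply_left hC x)
  haveI : Module.Injective R N :=
    inj_retract (e1 : N →ₗ[R] N') (e1.symm : N' →ₗ[R] N) (fun x => e1.symm_apply_apply x)
  -- the inclusion `N ↪ R` splits
  obtain ⟨r, hr⟩ := Module.Injective.out N.subtype N.injective_subtype LinearMap.id
  exact ⟨LinearMap.ker r, LinearMap.isCompl_of_proj hr⟩
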